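/- Let M = (x y; z w) ∈ SL₂(ℤ) with z ≠ 0, and define n_M := (x+w)/z - sign(z)·(3 + 12·s(w,|z|)), where s denotes the Dedekind sum. Let k be an integer and M' := (1 k; 0 1) M (1 -k; 0 1). Then n_{M'} = n_M. -/

import Mathlib

/-- The sawtooth function ((x)). -/
def saw (x : ℚ) : ℚ := if x.den = 1 then 0 else x - ⌊x⌋ - 1/2

/-- The Dedekind sum s(h,k) = Σ_{m=1}^{k} ((hm/k))((m/k)). -/
noncomputable def dedekindSum (h k : ℤ) : ℚ :=
  ∑ m ∈ Finset.Icc (1 : ℤ) k, saw (h * m / k) * saw (m / k)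

/-- The invariant n_M = (x+w)/z - sign(z)·(3 + 12·s(w,|z|)) for M = (x y; z w). -/
noncomputable def nMat (M : Matrix (Fin 2) (Fin 2) ℤ) : ℚ :=
  ((M 0 0 + M 1 1 : ℤ) : ℚ) / ((M 1 0 : ℤ) : ℚ)
    - ((M 1 0).sign : ℚ) * (3 + 12 * dedekindSum (M 1 1) |M 1 0|)

lemma den_one_add_int {y : ℚ} (m : ℤ) (hy : y.den = 1) : (y + m).den = 1 := by
  obtain ⟨a, ha⟩ : ∃ a : ℤ, (a : ℚ) = y := ⟨y.num, Rat.coe_int_num_of_den_eq_one hy⟩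
  rw [← ha, ← Int.cast_add]
  exact Rat.den_intCast _

lemma saw_add_int (x : ℚ) (n : ℤ) : saw (x + n) = saw x := by
  unfold saw
  have hden : (x + n).den = 1 ↔ x.den = 1 := by
    constructor
    · intro h
      have := den_one_add_int (-n) h
      simpa using this
    · exact den_one_add_int n
  rcases em (x.den = 1) with h | h
  · rw [if_pos h, if_pos (hden.mpr h)]
  · rw [if_neg h, if_neg (fun hc => h (hden.mp hc))]
    push_cast
    rw [Int.floor_add_intCast]
    push_cast
    ring

lemma dedekindSum_sub_mul (h k c : ℤ) (hk : k ≠ 0) :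
    dedekindSum (h - c * k) |k| = dedekindSum h |k| := by
  unfold dedekindSum
  refine Finset.sum_congr rfl fun m _ => ?_
  congr 1
  have habs : |(k : ℚ)| ≠ 0 := by
    simpa using abs_ne_zero.mpr (by exact_mod_cast hk : (k:ℚ) ≠ 0)
  have hs : (k.sign : ℚ) * |(k : ℚ)| = (k : ℚ) := by
    have := congrArg (Int.cast : ℤ → ℚ) (Int.sign_mul_abs k)
    push_cast at this
    exact this
  have hkey : ((h : ℚ) - c * k) * m / |(k : ℚ)|
      = (h : ℚ) * m / |(k : ℚ)| + ((-(c * k.sign * m) : ℤ) : ℚ) := by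
    field_simp
    push_cast
    linear_combination (c : ℚ) * m * hs
  push_cast
  rw [hkey, saw_add_int]

theorem nMat_conj_translation (M M' : Matrix (Fin 2) (Fin 2) ℤ)
    (hdet : M.det = 1) (hz : M 1 0 ≠ 0) (k : ℤ)
    (hM' : M' = !![1, k; 0, 1] * M * !![1, -k; 0, 1]) :
    nMat M' = nMat M := by
  have h00 : M' 0 0 = M 0 0 + k * M 1 0 := by
    subst hM'; simp [Matrix.mul_apply, Matrix.vecMul, dotProduct, Fin.sum_univ_succ, Matrix.vecHead, Matrix.vecTail]
  have h10 : M' 1 0 = M 1 0 := by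
    subst hM'; simp [Matrix.mul_apply, Matrix.vecMul, dotProduct, Fin.sum_univ_succ, Matrix.vecHead, Matrix.vecTail]
  have h11 : M' 1 1 = M 1 1 - k * M 1 0 := by
    subst hM'; simp [Matrix.mul_apply, Matrix.vecMul, dotProduct, Fin.sum_univ_succ, Matrix.vecHead, Matrix.vecTail]; ring
  unfold nMat
  rw [h00, h10, h11, dedekindSum_sub_mul _ _ _ hz]
  push_cast
  ring
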